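/- If q₁(0) > 0 and λ(t) ≥ λ_min > 0 for all t, then along the fluid-limit solution q₁(t) > 0 for all t ≥ 0; indeed the drift of q₁ is nonnegative whenever q₁(t) < λ_min, because λ(t)p₀ − (q₁ − q₂) ≥ min{λ(t) − (q₁ − q₂), δ₁ν} ≥ min{λ_min − q₁, δ₁ν} ≥ 0. -/
import Mathlib


open Filter

/-- The coefficient `p₀(q, δ, λ)` of the fluid-limit dynamics, expressed in terms of
`q₁, q₂, δ₀, δ₁`: equal to `1` if `u = 1 - q₁ - δ₀ - δ₁ > 0`, and to
`min{λ⁻¹(δ₁ν + q₁ - q₂), 1}` otherwise. -/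
noncomputable def fluidP0' (lam nu q1 q2 d0 d1 : ℝ) : ℝ :=
  if 1 - q1 - d0 - d1 > 0 then 1 else min (lam⁻¹ * (d1 * nu + q1 - q2)) 1

/-- If `q₁(0) > 0` and `λ(t) ≥ λ_min > 0`, then along the fluid-limit solution the
drift of `q₁` is nonnegative whenever `q₁(t) < λ_min` (since
`λ(t)p₀ - (q₁ - q₂) ≥ min{λ(t) - (q₁ - q₂), δ₁ν} ≥ min{λ_min - q₁, δ₁ν} ≥ 0`),
and consequently `q₁(t) > 0` for all `t ≥ 0`. -/
theorem q1_stays_positive (nu lammin : ℝ) (hnu : 0 < nu) (hlammin : 0 < lammin)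
    (lam : ℝ → ℝ) (hlamlb : ∀ t, 0 ≤ t → lammin ≤ lam t)
    (hlamub : ∃ C, ∀ t, 0 ≤ t → lam t ≤ C)
    (q1 q2 d0 d1 : ℝ → ℝ)
    (hq1cont : Continuous q1) (hq2cont : Continuous q2)
    (hd0cont : Continuous d0) (hd1cont : Continuous d1)
    -- the trajectory stays in E
    (hq2nonneg : ∀ t, 0 ≤ t → 0 ≤ q2 t) (hq21 : ∀ t, 0 ≤ t → q2 t ≤ q1 t)
    (hq1le : ∀ t, 0 ≤ t → q1 t ≤ 1)
    (hd0mem : ∀ t, 0 ≤ t → d0 t ∈ Set.Icc (0:ℝ) 1)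
    (hd1mem : ∀ t, 0 ≤ t → d1 t ∈ Set.Icc (0:ℝ) 1)
    (hEsum : ∀ t, 0 ≤ t → q1 t + d0 t + d1 t ≤ 1)
    -- fluid-limit integral equation for q₁
    (hq1eq : ∀ t, 0 ≤ t →
      q1 t = q1 0 + ∫ s in (0:ℝ)..t,
        (lam s * fluidP0' (lam s) nu (q1 s) (q2 s) (d0 s) (d1 s) - (q1 s - q2 s)))
    (hq10 : 0 < q1 0) :
    (∀ t, 0 ≤ t → q1 t < lammin →
      0 ≤ lam t * fluidP0' (lam t) nu (q1 t) (q2 t) (d0 t) (d1 t) - (q1 t - q2 t)) ∧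
    ∀ t, 0 ≤ t → 0 < q1 t := by

  have key : ∀ t, 0 ≤ t → q1 t < lammin →
      0 ≤ lam t * fluidP0' (lam t) nu (q1 t) (q2 t) (d0 t) (d1 t) - (q1 t - q2 t) := by
    intro t ht hlt
    have hL : lammin ≤ lam t := hlamlb t ht
    have hLpos : 0 < lam t := lt_of_lt_of_le hlammin hL
    have hq2 : 0 ≤ q2 t := hq2nonneg t ht
    have hq21' : q2 t ≤ q1 t := hq21 t ht
    have hd1 : 0 ≤ d1 t := (hd1mem t ht).1
    unfold fluidP0'
    split_ifs with h
    · nlinarith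
    · have hmul : lam t * min ((lam t)⁻¹ * (d1 t * nu + q1 t - q2 t)) 1
          = min (d1 t * nu + q1 t - q2 t) (lam t) := by
        rw [mul_min_of_nonneg _ _ hLpos.le, ← mul_assoc,
          mul_inv_cancel₀ hLpos.ne', one_mul, mul_one]
      rw [hmul, sub_nonneg]
      apply le_min
      · nlinarith
      · linarith
  refine ⟨key, ?_⟩
  by_contra hcon
  push_neg at hcon
  obtain ⟨t0, ht0, hq1t0⟩ := hcon
  set f : ℝ → ℝ := fun s =>
    lam s * fluidP0' (lam s) nu (q1 s) (q2 s) (d0 s) (d1 s) - (q1 s - q2 s) with hf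
  set S : Set ℝ := {t | 0 ≤ t ∧ q1 t ≤ 0} with hSdef
  have hSne : S.Nonempty := ⟨t0, ht0, hq1t0⟩
  have hSbdd : BddBelow S := ⟨0, fun x hx => hx.1⟩
  have hSclosed : IsClosed S := by
    have : S = Set.Ici (0:ℝ) ∩ q1 ⁻¹' Set.Iic 0 := rfl
    rw [this]
    exact isClosed_Ici.inter (isClosed_Iic.preimage hq1cont)
  set T := sInf S with hT
  have hTS : T ∈ S := hSclosed.csInf_mem hSne hSbdd
  have hT0 : 0 ≤ T := hTS.1
  have hq1T : q1 T ≤ 0 := hTS.2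
  have hTpos : 0 < T := by
    rcases lt_or_eq_of_le hT0 with h | h
    · exact h
    · exfalso; rw [← h] at hq1T; linarith
  -- continuity: q1 < lammin near T
  have hev : ∀ᶠ u in nhds T, q1 u < lammin := by
    have : q1 T < lammin := lt_of_le_of_lt hq1T hlammin
    exact (hq1cont.continuousAt).eventually_lt_const this
  obtain ⟨δ, hδpos, hδ⟩ := Metric.eventually_nhds_iff.mp hev
  set s := max (T - δ/2) (T/2) with hs
  have hs0 : 0 ≤ s := le_trans (by linarith) (le_max_right _ _)
  have hsT : s < T := max_lt (by linarith) (by linarith)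
  have hsnot : s ∉ S := fun hmem => absurd (csInf_le hSbdd hmem) (not_le.mpr hsT)
  have hq1s : 0 < q1 s := by
    by_contra hc
    exact hsnot ⟨hs0, le_of_not_gt hc⟩
  have hnear : ∀ u ∈ Set.Icc s T, q1 u < lammin := by
    intro u hu
    apply hδ
    rw [Real.dist_eq, abs_lt]
    constructor
    · have : T - δ/2 ≤ s := le_max_left _ _
      have := hu.1
      linarith
    · have := hu.2; linarith
  have hfnn : ∀ u ∈ Set.Icc s T, 0 ≤ f u := by
    intro u hu
    exact key u (le_trans hs0 hu.1) (hnear u hu)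
  have hint_nn : 0 ≤ ∫ u in s..T, f u :=
    intervalIntegral.integral_nonneg hsT.le hfnn
  have heqT : q1 T = q1 0 + ∫ u in (0:ℝ)..T, f u := hq1eq T hT0
  by_cases hint : IntervalIntegrable f MeasureTheory.volume 0 T
  · have hsub : Set.uIcc s T ⊆ Set.uIcc (0:ℝ) T := by
      rw [Set.uIcc_of_le hsT.le, Set.uIcc_of_le hT0]
      exact Set.Icc_subset_Icc hs0 le_rfl
    have hsub2 : Set.uIcc (0:ℝ) s ⊆ Set.uIcc (0:ℝ) T := by
      rw [Set.uIcc_of_le hs0, Set.uIcc_of_le hT0]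
      exact Set.Icc_subset_Icc le_rfl hsT.le
    have h1 : IntervalIntegrable f MeasureTheory.volume 0 s := hint.mono_set hsub2
    have h2 : IntervalIntegrable f MeasureTheory.volume s T := hint.mono_set hsub
    have hadd : (∫ u in (0:ℝ)..s, f u) + ∫ u in s..T, f u = ∫ u in (0:ℝ)..T, f u :=
      intervalIntegral.integral_add_adjacent_intervals h1 h2
    have heqs : q1 s = q1 0 + ∫ u in (0:ℝ)..s, f u := hq1eq s hs0
    linarith
  · have : (∫ u in (0:ℝ)..T, f u) = 0 := intervalIntegral.integral_undef hint
    rw [this] at heqT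
    linarith
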